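/- Assume a₂t² + b₂t + c₂ > 0 for all t ∈ ℝ, d̂ = 0 and ê ≠ 0, and set t₀ = −f̂/ê. If ê > 0, then R is strictly decreasing on (−∞, t₀] and strictly increasing on [t₀, ∞), so t₀ is the unique global minimizer of R on ℝ. If ê < 0, then R is strictly increasing on (−∞, t₀] and strictly decreasing on [t₀, ∞), so t₀ is the unique global maximizer of R on ℝ. -/

import Mathlib

/-- Monotonicity of `R(t) = (a₁t²+b₁t+c₁)/(a₂t²+b₂t+c₂)` when `d̂ = 0` and `ê ≠ 0`:
with `t₀ = −f̂/ê`, if `ê > 0` then `R` is strictly decreasing on `(−∞, t₀]` and strictly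
increasing on `[t₀, ∞)`, so `t₀` is the unique global minimizer; if `ê < 0` the situation
is dual and `t₀` is the unique global maximizer. -/
theorem stmt10 (a₁ b₁ c₁ a₂ b₂ c₂ : ℝ)
    (hden : ∀ t : ℝ, 0 < a₂ * t ^ 2 + b₂ * t + c₂)
    (R : ℝ → ℝ)
    (hR : R = fun t => (a₁ * t ^ 2 + b₁ * t + c₁) / (a₂ * t ^ 2 + b₂ * t + c₂))
    (dhat ehat fhat : ℝ)
    (hd : dhat = a₁ * b₂ - a₂ * b₁)
    (he : ehat = 2 * (a₁ * c₂ - a₂ * c₁))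
    (hf : fhat = b₁ * c₂ - b₂ * c₁)
    (hd0 : dhat = 0) (he0 : ehat ≠ 0)
    (t₀ : ℝ) (ht₀ : t₀ = -fhat / ehat) :
    (0 < ehat →
      StrictAntiOn R (Set.Iic t₀) ∧ StrictMonoOn R (Set.Ici t₀) ∧
      ∀ t : ℝ, t ≠ t₀ → R t₀ < R t) ∧
    (ehat < 0 →
      StrictMonoOn R (Set.Iic t₀) ∧ StrictAntiOn R (Set.Ici t₀) ∧
      ∀ t : ℝ, t ≠ t₀ → R t < R t₀) := by
  have hdd : a₁ * b₂ - a₂ * b₁ = 0 := by rw [← hd]; exact hd0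
  have ht₀' : ehat * t₀ = -fhat := by
    rw [ht₀]; field_simp
  have hfac : ∀ x y : ℝ, (ehat / 2) * (x + y) + fhat = (ehat / 2) * (x + y - 2 * t₀) := by
    intro x y; linear_combination ht₀'
  have hkey : ∀ x y : ℝ, R x - R y =
      (x - y) * ((ehat / 2) * (x + y - 2 * t₀)) /
        ((a₂ * x ^ 2 + b₂ * x + c₂) * (a₂ * y ^ 2 + b₂ * y + c₂)) := by
    intro x y
    have hx := (hden x).ne'
    have hy := (hden y).ne'
    rw [hR]
    simp only
    rw [div_sub_div _ _ hx hy]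
    congr 1
    rw [← hfac x y, he, hf]
    linear_combination (x - y) * x * y * hdd
  -- sign of R x - R y for x < y
  have hsign : ∀ x y : ℝ, x < y →
      ((x + y < 2 * t₀ → (R x - R y) * ehat > 0) ∧ (2 * t₀ < x + y → (R x - R y) * ehat < 0)) := by
    intro x y hxy
    have hpos : 0 < (a₂ * x ^ 2 + b₂ * x + c₂) * (a₂ * y ^ 2 + b₂ * y + c₂) :=
      mul_pos (hden x) (hden y)
    have he2 : 0 < ehat ^ 2 := by rcases he0.lt_or_gt with h | h <;> nlinarith
    constructor
    · intro h
      rw [hkey x y, div_mul_eq_mul_div]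
      apply div_pos _ hpos
      have hrw : (x - y) * (ehat / 2 * (x + y - 2 * t₀)) * ehat
          = (y - x) * (2 * t₀ - (x + y)) * (ehat ^ 2 / 2) := by ring
      rw [hrw]
      exact mul_pos (mul_pos (by linarith) (by linarith)) (half_pos he2)
    · intro h
      rw [hkey x y, div_mul_eq_mul_div]
      apply div_neg_of_neg_of_pos _ hpos
      have hrw : (x - y) * (ehat / 2 * (x + y - 2 * t₀)) * ehat
          = -((y - x) * ((x + y) - 2 * t₀) * (ehat ^ 2 / 2)) := by ring
      rw [hrw]
      exact neg_neg_of_pos (mul_pos (mul_pos (by linarith) (by linarith)) (half_pos he2))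
  have hmin : ∀ t : ℝ, t ≠ t₀ → 0 < (R t - R t₀) * ehat := by
    intro t ht
    have hpos : 0 < (a₂ * t ^ 2 + b₂ * t + c₂) * (a₂ * t₀ ^ 2 + b₂ * t₀ + c₂) :=
      mul_pos (hden t) (hden t₀)
    rw [hkey t t₀, div_mul_eq_mul_div]
    apply div_pos _ hpos
    have he2 : 0 < ehat ^ 2 := by rcases he0.lt_or_gt with h | h <;> nlinarith
    have h2 : (0:ℝ) < (t - t₀) ^ 2 := by rcases (sub_ne_zero.mpr ht).lt_or_gt with h | h <;> nlinarith
    have hrw : (t - t₀) * (ehat / 2 * (t + t₀ - 2 * t₀)) * ehat = (t - t₀) ^ 2 * ehat ^ 2 / 2 := by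
      ring
    rw [hrw]
    exact div_pos (mul_pos h2 he2) two_pos
  constructor
  · intro hepos
    refine ⟨?_, ?_, ?_⟩
    · intro x hx y hy hxy
      nlinarith [(hsign x y hxy).1 (by simp at hx hy ⊢; linarith)]
    · intro x hx y hy hxy
      nlinarith [(hsign x y hxy).2 (by simp at hx hy ⊢; linarith)]
    · intro t ht
      nlinarith [hmin t ht]
  · intro heneg
    refine ⟨?_, ?_, ?_⟩
    · intro x hx y hy hxy
      nlinarith [(hsign x y hxy).1 (by simp at hx hy ⊢; linarith)]
    · intro x hx y hy hxy
      nlinarith [(hsign x y hxy).2 (by simp at hx hy ⊢; linarith)]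
    · intro t ht
      nlinarith [hmin t ht]
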